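/- Let ℓ ≥ 2, q = 2^ℓ, and let r be an integer with 1 ≤ r < q/2. Then the cardinalities of the sets S_t satisfy the recursions: |S_0(ℓ; r)| = 3·|S_0(ℓ−1; r)| + |S_1(ℓ−1; r)|, |S_1(ℓ; r)| = |S_0(ℓ−1; r)| + |S_1(ℓ−1; r)| + |S_2(ℓ−1; r)|, and |S_2(ℓ; r)| = |S_2(ℓ−1; r)|. -/

import Mathlib

/-- `u ≤₂ v`: every binary digit of `u` is at most the corresponding binary digit
of `v` (the 2-shadow relation). -/
def le2 (u v : ℕ) : Prop := ∀ k, u.testBit k = true → v.testBit k = true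

/-- The set `S_t(ℓ; r)` of pairs `(a, b)` with `0 ≤ a, b ≤ 2^ℓ − 1` for which there exist
`i ≤₂ b`, `j ≤₂ (b − i)` and `1 ≤ r' ≤ r` with `2i + j + a = (t+1)·2^ℓ − r'`. -/
def Sset (ℓ r t : ℕ) : Set (ℕ × ℕ) :=
  {p | p.1 ≤ 2 ^ ℓ - 1 ∧ p.2 ≤ 2 ^ ℓ - 1 ∧
    ∃ i j r' : ℕ, le2 i p.2 ∧ le2 j (p.2 - i) ∧ 1 ≤ r' ∧ r' ≤ r ∧
      2 * i + j + p.1 = (t + 1) * 2 ^ ℓ - r'}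


lemma aux_mod2_eq (x : ℕ) : x % 2 = (x.testBit 0).toNat := by
  rw [Nat.testBit_zero]; rcases Nat.mod_two_eq_zero_or_one x with h | h <;> simp [h]

lemma aux_add_eq : ∀ x y : ℕ, x + y = 2 * (x &&& y) + (x ^^^ y) := by
  have key : ∀ n x y : ℕ, x + y ≤ n → x + y = 2 * (x &&& y) + (x ^^^ y) := by
    intro n
    induction n with
    | zero => intro x y h
              have hx : x = 0 := by omega
              have hy : y = 0 := by omega
              subst hx; subst hy; simp
    | succ n ih =>
      intro x y h
      rcases Nat.eq_zero_or_pos (x + y) with h0 | h0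
      · have hx : x = 0 := by omega
        have hy : y = 0 := by omega
        subst hx; subst hy; simp
      · have hrec : x / 2 + y / 2 = 2 * (x / 2 &&& y / 2) + (x / 2 ^^^ y / 2) := by
          apply ih; omega
        rw [← Nat.and_div_two, ← Nat.xor_div_two] at hrec
        have hA : (x &&& y) % 2 = (x % 2) * (y % 2) := by
          rw [aux_mod2_eq (x &&& y), Nat.testBit_and, aux_mod2_eq x, aux_mod2_eq y]
          cases x.testBit 0 <;> cases y.testBit 0 <;> simp
        have hB : (x ^^^ y) % 2 = (x % 2 + y % 2) % 2 := by
          rw [aux_mod2_eq (x ^^^ y), Nat.testBit_xor, aux_mod2_eq x, aux_mod2_eq y]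
          cases x.testBit 0 <;> cases y.testBit 0 <;> simp
        rcases Nat.mod_two_eq_zero_or_one x with hx | hx <;>
          rcases Nat.mod_two_eq_zero_or_one y with hy | hy <;>
          rw [hx, hy] at hA hB <;> omega
  intro x y; exact key (x + y) x y le_rfl

lemma le2_and (u v : ℕ) (h : le2 u v) : u &&& v = u := by
  apply Nat.eq_of_testBit_eq
  intro i
  rw [Nat.testBit_and]
  cases hu : u.testBit i
  · simp
  · simp [h i hu]

lemma le2_le {u v : ℕ} (h : le2 u v) : u ≤ v :=
  le2_and u v h ▸ Nat.and_le_right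

lemma aux_disj_add {x y : ℕ} (h : x &&& y = 0) : x + y = x ^^^ y := by
  have := aux_add_eq x y; rw [h] at this; omega

lemma sub_of_le2 {i b : ℕ} (h : le2 i b) : b - i = b ^^^ i := by
  have hd : i &&& (b ^^^ i) = 0 := by
    apply Nat.eq_of_testBit_eq
    intro k
    rw [Nat.testBit_and, Nat.testBit_xor, Nat.zero_testBit]
    cases hi : i.testBit k
    · simp
    · simp [h k hi]
  have hadd : i + (b ^^^ i) = b := by
    rw [aux_disj_add hd, Nat.xor_comm b i, ← Nat.xor_assoc, Nat.xor_self, Nat.zero_xor]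
  omega

lemma mem_Sset_iff (ℓ r t a b : ℕ) :
    (a, b) ∈ Sset ℓ r t ↔ a ≤ 2 ^ ℓ - 1 ∧ b ≤ 2 ^ ℓ - 1 ∧
      ∃ x y r' : ℕ, le2 x b ∧ le2 y b ∧ 1 ≤ r' ∧ r' ≤ r ∧
        x + y + a = (t + 1) * 2 ^ ℓ - r' := by
  show (a ≤ 2 ^ ℓ - 1 ∧ b ≤ 2 ^ ℓ - 1 ∧
      ∃ i j r' : ℕ, le2 i b ∧ le2 j (b - i) ∧ 1 ≤ r' ∧ r' ≤ r ∧
        2 * i + j + a = (t + 1) * 2 ^ ℓ - r') ↔ _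
  constructor
  · rintro ⟨ha, hb, i, j, r', hi, hj, h1, h2, heq⟩
    refine ⟨ha, hb, i, i + j, r', hi, ?_, h1, h2, by omega⟩
    rw [sub_of_le2 hi] at hj
    have hdisj : i &&& j = 0 := by
      apply Nat.eq_of_testBit_eq
      intro k
      rw [Nat.testBit_and, Nat.zero_testBit]
      cases hik : i.testBit k
      · simp
      · cases hjk : j.testBit k
        · simp
        · have h2' := hj k hjk
          rw [Nat.testBit_xor, hi k hik, hik] at h2'
          simp at h2'
    rw [aux_disj_add hdisj]
    intro k hk
    rw [Nat.testBit_xor] at hk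
    cases hik : i.testBit k
    · cases hjk : j.testBit k
      · rw [hik, hjk] at hk; simp at hk
      · have := hj k hjk
        rw [Nat.testBit_xor] at this
        cases hbk : b.testBit k
        · rw [hbk] at this
          cases hik2 : i.testBit k
          · rw [hik2] at this; simp at this
          · exact absurd hik2 (by rw [hik]; simp)
        · rfl
    · exact hi k hik
  · rintro ⟨ha, hb, x, y, r', hx, hy, h1, h2, heq⟩
    have hixy : le2 (x &&& y) b := by
      intro k hk
      rw [Nat.testBit_and] at hk
      exact hx k (by revert hk; cases x.testBit k <;> simp)
    refine ⟨ha, hb, x &&& y, x ^^^ y, r', hixy, ?_, h1, h2, ?_⟩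
    · rw [sub_of_le2 hixy]
      intro k hk
      rw [Nat.testBit_xor] at hk ⊢
      rw [Nat.testBit_and]
      cases hxk : x.testBit k <;> cases hyk : y.testBit k <;> rw [hxk, hyk] at hk <;>
        simp at hk <;> simp
      · exact hy k hyk
      · exact hx k hxk
    · have := aux_add_eq x y
      omega

lemma le2_zero_left (v : ℕ) : le2 0 v := by intro k h; simp [Nat.zero_testBit] at h

lemma le2_of_lt_pow {x b m : ℕ} (hx : x < 2 ^ m) (h : le2 x b) : le2 x (b % 2 ^ m) := by
  intro k hk
  rw [Nat.testBit_mod_two_pow]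
  have hkm : k < m := by
    by_contra hge
    have : x.testBit k = false := Nat.testBit_lt_two_pow (lt_of_lt_of_le hx (Nat.pow_le_pow_right (by norm_num) (by omega)))
    rw [this] at hk; exact absurd hk (by simp)
  simp [hkm, h k hk]

lemma le2_mod_le2 {x b m : ℕ} (h : le2 x (b % 2 ^ m)) : le2 x b := by
  intro k hk
  have := h k hk
  rw [Nat.testBit_mod_two_pow] at this
  revert this
  cases b.testBit k <;> simp

lemma testBit_false_lt {y m : ℕ} (hy : y < 2 ^ (m + 1)) (h : y.testBit m = false) : y < 2 ^ m := by
  have hpos : 0 < 2 ^ m := Nat.pow_pos (by norm_num)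
  have h2 : 2 ^ (m + 1) = 2 ^ m * 2 := pow_succ 2 m
  have hd : y / 2 ^ m < 2 := Nat.div_lt_of_lt_mul (by omega)
  rw [Nat.testBit_eq_decide_div_mod_eq, decide_eq_false_iff_not] at h
  have hdm := Nat.div_add_mod y (2 ^ m)
  obtain ⟨q, hq'⟩ : ∃ q, y / 2 ^ m = q := ⟨_, rfl⟩
  rw [hq'] at hd h hdm
  have hq : q = 0 := by omega
  rw [hq, Nat.mul_zero] at hdm
  have := Nat.mod_lt y hpos
  omega

lemma ge_pow_of_testBit {x m : ℕ} (h : x.testBit m = true) : 2 ^ m ≤ x := by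
  by_contra hlt
  rw [Nat.testBit_lt_two_pow (by omega)] at h
  exact absurd h (by simp)

lemma sub_pow_testBit {x m : ℕ} (hx : x < 2 ^ (m+1)) (h : x.testBit m = true) :
    x - 2 ^ m < 2 ^ m ∧ ∀ k, (x - 2 ^ m).testBit k = true → k ≠ m ∧ x.testBit k = true := by
  have hle : 2 ^ m ≤ x := ge_pow_of_testBit h
  have hxor : x - 2 ^ m = x ^^^ 2 ^ m := by
    have hd : (2 ^ m) &&& (x ^^^ 2 ^ m) = 0 := by
      apply Nat.eq_of_testBit_eq
      intro k
      rw [Nat.testBit_and, Nat.testBit_xor, Nat.zero_testBit, Nat.testBit_two_pow]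
      by_cases hk : m = k
      · subst hk; simp [h]
      · simp [hk]
    have : 2 ^ m + (x ^^^ 2 ^ m) = x := by
      rw [aux_disj_add hd, Nat.xor_comm x (2 ^ m), ← Nat.xor_assoc, Nat.xor_self, Nat.zero_xor]
    omega
  constructor
  · apply testBit_false_lt (by omega)
    rw [hxor, Nat.testBit_xor, h, Nat.testBit_two_pow]; simp
  · intro k hk
    rw [hxor, Nat.testBit_xor, Nat.testBit_two_pow] at hk
    by_cases hkm : m = k
    · subst hkm; rw [h] at hk; simp at hk
    · rw [decide_eq_false hkm] at hk
      refine ⟨fun hh => hkm hh.symm, ?_⟩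
      revert hk; cases x.testBit k <;> simp

/-- The shift lemma: if x, y ≤₂ b < 2^m and x+y ≥ 2^m, we can subtract 2^m. -/
lemma shift_lemma : ∀ m b x y : ℕ, b < 2 ^ m → le2 x b → le2 y b → 2 ^ m ≤ x + y →
    ∃ x' y', le2 x' b ∧ le2 y' b ∧ x' + y' + 2 ^ m = x + y := by
  intro m
  induction m with
  | zero =>
    intro b x y hb hx hy hsum
    interval_cases b
    have : x = 0 := by have := le2_le hx; omega
    have : y = 0 := by have := le2_le hy; omega
    omega
  | succ m ih =>
    intro b x y hb hx hy hsum
    have hxb : x ≤ b := le2_le hx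
    have hyb : y ≤ b := le2_le hy
    cases hxm : x.testBit m with
    | false =>
      cases hym : y.testBit m with
      | false =>
        have : x < 2 ^ m := testBit_false_lt (by omega) hxm
        have : y < 2 ^ m := testBit_false_lt (by omega) hym
        have : 2 ^ (m+1) = 2 * 2 ^ m := by rw [pow_succ]; ring
        omega
      | true =>
        -- y has bit m, x doesn't
        have hx' : x < 2 ^ m := testBit_false_lt (by omega) hxm
        obtain ⟨hy1, hy2⟩ := sub_pow_testBit (by omega) hym
        have hxm' : le2 x (b % 2 ^ m) := le2_of_lt_pow hx' hx
        have hym' : le2 (y - 2 ^ m) (b % 2 ^ m) := by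
          apply le2_of_lt_pow hy1
          intro k hk
          exact hy k (hy2 k hk).2
        have hsum' : 2 ^ m ≤ x + (y - 2 ^ m) := by
          have h2 : 2 ^ (m+1) = 2 * 2 ^ m := by rw [pow_succ]; ring
          have := ge_pow_of_testBit hym
          omega
        obtain ⟨x', y', hx'', hy'', hsum''⟩ :=
          ih (b % 2 ^ m) x (y - 2 ^ m) (Nat.mod_lt _ (Nat.pow_pos (by norm_num))) hxm' hym' hsum'
        refine ⟨x', y', le2_mod_le2 hx'', le2_mod_le2 hy'', ?_⟩
        have := ge_pow_of_testBit hym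
        have h2 : 2 ^ (m+1) = 2 * 2 ^ m := by rw [pow_succ]; ring
        omega
    | true =>
      cases hym : y.testBit m with
      | false =>
        have hy' : y < 2 ^ m := testBit_false_lt (by omega) hym
        obtain ⟨hx1, hx2⟩ := sub_pow_testBit (by omega) hxm
        have hym' : le2 y (b % 2 ^ m) := le2_of_lt_pow hy' hy
        have hxm' : le2 (x - 2 ^ m) (b % 2 ^ m) := by
          apply le2_of_lt_pow hx1
          intro k hk
          exact hx k (hx2 k hk).2
        have hsum' : 2 ^ m ≤ (x - 2 ^ m) + y := by
          have h2 : 2 ^ (m+1) = 2 * 2 ^ m := by rw [pow_succ]; ring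
          have := ge_pow_of_testBit hxm
          omega
        obtain ⟨x', y', hx'', hy'', hsum''⟩ :=
          ih (b % 2 ^ m) (x - 2 ^ m) y (Nat.mod_lt _ (Nat.pow_pos (by norm_num))) hxm' hym' hsum'
        refine ⟨x', y', le2_mod_le2 hx'', le2_mod_le2 hy'', ?_⟩
        have := ge_pow_of_testBit hxm
        have h2 : 2 ^ (m+1) = 2 * 2 ^ m := by rw [pow_succ]; ring
        omega
      | true =>
        obtain ⟨hx1, hx2⟩ := sub_pow_testBit (by omega) hxm
        obtain ⟨hy1, hy2⟩ := sub_pow_testBit (by omega) hym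
        refine ⟨x - 2 ^ m, y - 2 ^ m, ?_, ?_, ?_⟩
        · intro k hk; exact hx k (hx2 k hk).2
        · intro k hk; exact hy k (hy2 k hk).2
        · have := ge_pow_of_testBit hxm
          have := ge_pow_of_testBit hym
          have h2 : 2 ^ (m+1) = 2 * 2 ^ m := by rw [pow_succ]; ring
          omega

lemma Sset_mono {m r t : ℕ} (hr : r < 2 ^ m) : Sset m r (t + 1) ⊆ Sset m r t := by
  rintro ⟨a, b⟩ hmem
  rw [mem_Sset_iff] at hmem ⊢
  obtain ⟨ha, hb, x, y, r', hx, hy, h1, h2, heq⟩ := hmem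
  refine ⟨ha, hb, ?_⟩
  have hpos : 0 < 2 ^ m := Nat.pow_pos (by norm_num)
  have hxb := le2_le hx
  have hyb := le2_le hy
  have hBge : 2 ^ m ≤ (t + 1) * 2 ^ m := Nat.le_mul_of_pos_left _ (by omega)
  have hsplit : (t + 1 + 1) * 2 ^ m = (t + 1) * 2 ^ m + 2 ^ m := by ring
  rw [hsplit] at heq
  obtain ⟨B, hB⟩ : ∃ B, (t + 1) * 2 ^ m = B := ⟨_, rfl⟩
  rw [hB] at heq hBge ⊢
  by_cases hcase : 2 ^ m ≤ x + y
  · obtain ⟨x', y', hx', hy', hsum⟩ := shift_lemma m b x y (by omega) hx hy hcase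
    exact ⟨x', y', r', hx', hy', h1, h2, by omega⟩
  · exact ⟨0, 0, B - a, le2_zero_left b, le2_zero_left b, by omega, by omega, by omega⟩

lemma Sset_not_mem {m r t a b : ℕ} (hr : r < 2 ^ m) (ht : 3 ≤ t) : (a, b) ∉ Sset m r t := by
  rw [mem_Sset_iff]
  rintro ⟨ha, hb, x, y, r', hx, hy, h1, h2, heq⟩
  have hpos : 0 < 2 ^ m := Nat.pow_pos (by norm_num)
  have hxb := le2_le hx
  have hyb := le2_le hy
  have h4 : 4 * 2 ^ m ≤ (t + 1) * 2 ^ m := Nat.mul_le_mul_right _ (by omega)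
  obtain ⟨A, hA⟩ : ∃ A, (t + 1) * 2 ^ m = A := ⟨_, rfl⟩
  rw [hA] at heq h4
  omega

lemma testBit_add_mul_pow {m x0 e k : ℕ} (hx0 : x0 < 2 ^ m) (he : e ≤ 1) :
    (x0 + e * 2 ^ m).testBit k = (x0.testBit k || (decide (e = 1) && decide (k = m))) := by
  interval_cases e
  · simp
  · rw [one_mul]
    have hd : x0 &&& 2 ^ m = 0 := by
      apply Nat.eq_of_testBit_eq
      intro i
      rw [Nat.testBit_and, Nat.testBit_two_pow, Nat.zero_testBit]
      by_cases him : m = i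
      · subst him; rw [Nat.testBit_lt_two_pow hx0]; simp
      · simp [him]
    rw [aux_disj_add hd, Nat.testBit_xor, Nat.testBit_two_pow]
    by_cases hkm : k = m
    · subst hkm; rw [Nat.testBit_lt_two_pow hx0]; simp
    · rw [decide_eq_false (fun h : m = k => hkm h.symm), Bool.xor_false,
        decide_eq_false hkm, Bool.and_false, Bool.or_false]

lemma le2_lift {m x0 b0 e d : ℕ} (hx0 : x0 < 2 ^ m) (hb0 : b0 < 2 ^ m)
    (hed : e ≤ d) (hd : d ≤ 1) (h : le2 x0 b0) :
    le2 (x0 + e * 2 ^ m) (b0 + d * 2 ^ m) := by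
  intro k hk
  rw [testBit_add_mul_pow hx0 (by omega)] at hk
  rw [testBit_add_mul_pow hb0 hd]
  simp only [Bool.or_eq_true, Bool.and_eq_true, decide_eq_true_eq] at hk ⊢
  rcases hk with hk | ⟨he1, hkm⟩
  · exact Or.inl (h k hk)
  · exact Or.inr ⟨by omega, hkm⟩

lemma Sset_up {m r t a0 b0 ea eb ex ey : ℕ} (hr : r < 2 ^ m)
    (hea : ea ≤ 1) (heb : eb ≤ 1) (hex : ex ≤ eb) (hey : ey ≤ eb)
    (hc : ex + ey + ea ≤ 2 * t + 1)
    (hmem : (a0, b0) ∈ Sset m r (2 * t + 1 - (ex + ey + ea))) :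
    (a0 + ea * 2 ^ m, b0 + eb * 2 ^ m) ∈ Sset (m + 1) r t := by
  rw [mem_Sset_iff] at hmem ⊢
  obtain ⟨ha0, hb0, x0, y0, r', hx0, hy0, h1, h2, heq⟩ := hmem
  have hpos : 0 < 2 ^ m := Nat.pow_pos (by norm_num)
  have h2m : 2 ^ (m + 1) = 2 ^ m * 2 := pow_succ 2 m
  have ha0' : a0 < 2 ^ m := by omega
  have hb0' : b0 < 2 ^ m := by omega
  have hx0b : x0 ≤ b0 := le2_le hx0
  have hy0b : y0 ≤ b0 := le2_le hy0
  have heam : ea * 2 ^ m ≤ 2 ^ m := by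
    calc ea * 2 ^ m ≤ 1 * 2 ^ m := Nat.mul_le_mul_right _ hea
    _ = 2 ^ m := one_mul _
  have hebm : eb * 2 ^ m ≤ 2 ^ m := by
    calc eb * 2 ^ m ≤ 1 * 2 ^ m := Nat.mul_le_mul_right _ heb
    _ = 2 ^ m := one_mul _
  have hx0l : x0 < 2 ^ m := by omega
  have hy0l : y0 < 2 ^ m := by omega
  refine ⟨by omega, by omega, x0 + ex * 2 ^ m, y0 + ey * 2 ^ m, r',
    le2_lift hx0l hb0' hex heb hx0, le2_lift hy0l hb0' hey heb hy0, h1, h2, ?_⟩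
  have hsplit : (t + 1) * 2 ^ (m + 1) =
      (2 * t + 1 - (ex + ey + ea) + 1) * 2 ^ m + (ex + ey + ea) * 2 ^ m := by
    rw [pow_succ]
    calc (t + 1) * (2 ^ m * 2) = (2 * t + 2) * 2 ^ m := by ring
    _ = ((2 * t + 1 - (ex + ey + ea) + 1) + (ex + ey + ea)) * 2 ^ m := by
        exact congrArg (fun n => n * 2 ^ m) (by omega)
    _ = _ := by rw [add_mul]
  rw [hsplit]
  have hring : (ex + ey + ea) * 2 ^ m = ex * 2 ^ m + ey * 2 ^ m + ea * 2 ^ m := by ring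
  have hPge : r' ≤ (2 * t + 1 - (ex + ey + ea) + 1) * 2 ^ m :=
    le_trans (by omega) (Nat.le_mul_of_pos_left _ (by omega))
  obtain ⟨P, hP⟩ : ∃ P, (2 * t + 1 - (ex + ey + ea) + 1) * 2 ^ m = P := ⟨_, rfl⟩
  obtain ⟨E1, hE1⟩ : ∃ E, ex * 2 ^ m = E := ⟨_, rfl⟩
  obtain ⟨E2, hE2⟩ : ∃ E, ey * 2 ^ m = E := ⟨_, rfl⟩
  obtain ⟨E3, hE3⟩ : ∃ E, ea * 2 ^ m = E := ⟨_, rfl⟩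
  obtain ⟨C, hC⟩ : ∃ C, (ex + ey + ea) * 2 ^ m = C := ⟨_, rfl⟩
  rw [hP] at heq hPge ⊢
  rw [hE1, hE2, hE3, hC] at hring ⊢
  omega

lemma Sset_down {m r t a b : ℕ} (hr : r < 2 ^ m)
    (hmem : (a, b) ∈ Sset (m + 1) r t) :
    a / 2 ^ m ≤ 1 ∧ b / 2 ^ m ≤ 1 ∧
    ∃ c, a / 2 ^ m ≤ c ∧ c ≤ a / 2 ^ m + 2 * (b / 2 ^ m) ∧ c ≤ 2 * t + 1 ∧
      (a % 2 ^ m, b % 2 ^ m) ∈ Sset m r (2 * t + 1 - c) := by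
  rw [mem_Sset_iff] at hmem
  obtain ⟨ha, hb, x, y, r', hx, hy, h1, h2, heq⟩ := hmem
  have hpos : 0 < 2 ^ m := Nat.pow_pos (by norm_num)
  have h2m : 2 ^ (m + 1) = 2 ^ m * 2 := pow_succ 2 m
  have hb' : b < 2 ^ (m + 1) := by omega
  have ha' : a < 2 ^ (m + 1) := by omega
  have hx' : x < 2 ^ (m + 1) := by have := le2_le hx; omega
  have hy' : y < 2 ^ (m + 1) := by have := le2_le hy; omega
  have hbd : b / 2 ^ m < 2 := Nat.div_lt_of_lt_mul (by omega)
  have had : a / 2 ^ m < 2 := Nat.div_lt_of_lt_mul (by omega)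
  have hxd : x / 2 ^ m < 2 := Nat.div_lt_of_lt_mul (by omega)
  have hyd : y / 2 ^ m < 2 := Nat.div_lt_of_lt_mul (by omega)
  have hdivBit : ∀ z : ℕ, z < 2 ^ (m + 1) → (z / 2 ^ m = 1 ↔ z.testBit m = true) := by
    intro z hz
    have hq : z / 2 ^ m < 2 := Nat.div_lt_of_lt_mul (by omega)
    rw [Nat.testBit_eq_decide_div_mod_eq]
    obtain ⟨q, hq'⟩ : ∃ q, z / 2 ^ m = q := ⟨_, rfl⟩
    rw [hq'] at hq ⊢
    simp only [decide_eq_true_eq]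
    omega
  have hxb_bit : x / 2 ^ m = 1 → b / 2 ^ m = 1 :=
    fun h1 => (hdivBit b hb').2 (hx m ((hdivBit x hx').1 h1))
  have hyb_bit : y / 2 ^ m = 1 → b / 2 ^ m = 1 :=
    fun h1 => (hdivBit b hb').2 (hy m ((hdivBit y hy').1 h1))
  have hxm : le2 (x % 2 ^ m) (b % 2 ^ m) := by
    intro k hk
    rw [Nat.testBit_mod_two_pow] at hk ⊢
    simp only [Bool.and_eq_true, decide_eq_true_eq] at hk ⊢
    exact ⟨hk.1, hx k hk.2⟩
  have hym : le2 (y % 2 ^ m) (b % 2 ^ m) := by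
    intro k hk
    rw [Nat.testBit_mod_two_pow] at hk ⊢
    simp only [Bool.and_eq_true, decide_eq_true_eq] at hk ⊢
    exact ⟨hk.1, hy k hk.2⟩
  have hxdm := Nat.div_add_mod x (2 ^ m)
  have hydm := Nat.div_add_mod y (2 ^ m)
  have hadm := Nat.div_add_mod a (2 ^ m)
  have hxmod : x % 2 ^ m < 2 ^ m := Nat.mod_lt _ hpos
  have hymod : y % 2 ^ m < 2 ^ m := Nat.mod_lt _ hpos
  have hamod : a % 2 ^ m < 2 ^ m := Nat.mod_lt _ hpos
  have hbmod : b % 2 ^ m < 2 ^ m := Nat.mod_lt _ hpos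
  -- generalize all div/mod quantities
  obtain ⟨ex, hex⟩ : ∃ e, x / 2 ^ m = e := ⟨_, rfl⟩
  obtain ⟨ey, hey⟩ : ∃ e, y / 2 ^ m = e := ⟨_, rfl⟩
  obtain ⟨ea, hea⟩ : ∃ e, a / 2 ^ m = e := ⟨_, rfl⟩
  obtain ⟨eb, heb⟩ : ∃ e, b / 2 ^ m = e := ⟨_, rfl⟩
  obtain ⟨x0, hx0⟩ : ∃ z, x % 2 ^ m = z := ⟨_, rfl⟩
  obtain ⟨y0, hy0⟩ : ∃ z, y % 2 ^ m = z := ⟨_, rfl⟩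
  obtain ⟨a0, ha0⟩ : ∃ z, a % 2 ^ m = z := ⟨_, rfl⟩
  rw [hex] at hxdm hxd hxb_bit
  rw [hey] at hydm hyd hyb_bit
  rw [hea] at hadm had ⊢
  rw [heb] at hbd hxb_bit hyb_bit ⊢
  rw [hx0] at hxdm hxmod hxm
  rw [hy0] at hydm hymod hym
  rw [ha0] at hadm hamod ⊢
  have hxeb : ex ≤ eb := by
    by_cases h1 : ex = 1
    · rw [h1, hxb_bit h1]
    · omega
  have hyeb : ey ≤ eb := by
    by_cases h1 : ey = 1
    · rw [h1, hyb_bit h1]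
    · omega
  have hsplit : (t + 1) * 2 ^ (m + 1) = (2 * t + 2) * 2 ^ m := by rw [pow_succ]; ring
  rw [hsplit] at heq
  have hle_r' : r' ≤ (2 * t + 2) * 2 ^ m :=
    le_trans (by omega) (Nat.le_mul_of_pos_left _ (by omega))
  have hring : (ex + ey + ea) * 2 ^ m = 2 ^ m * ex + 2 ^ m * ey + 2 ^ m * ea := by ring
  obtain ⟨V, hV⟩ : ∃ V, (2 * t + 2) * 2 ^ m = V := ⟨_, rfl⟩
  obtain ⟨C, hC⟩ : ∃ C, (ex + ey + ea) * 2 ^ m = C := ⟨_, rfl⟩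
  obtain ⟨E1, hE1⟩ : ∃ E, 2 ^ m * ex = E := ⟨_, rfl⟩
  obtain ⟨E2, hE2⟩ : ∃ E, 2 ^ m * ey = E := ⟨_, rfl⟩
  obtain ⟨E3, hE3⟩ : ∃ E, 2 ^ m * ea = E := ⟨_, rfl⟩
  rw [hV] at heq hle_r'
  rw [hC, hE1, hE2, hE3] at hring
  rw [hE1] at hxdm
  rw [hE2] at hydm
  rw [hE3] at hadm
  have heq2 : x0 + y0 + a0 + C + r' = V := by omega
  have hcle : ex + ey + ea ≤ 2 * t + 1 := by
    by_contra hcc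
    have hmul : V ≤ C := by
      rw [← hV, ← hC]
      exact Nat.mul_le_mul_right _ (by omega)
    omega
  refine ⟨by omega, by omega, ex + ey + ea, by omega, by omega, hcle, ?_⟩
  rw [mem_Sset_iff]
  refine ⟨by omega, by omega, x0, y0, r', hxm, hym, h1, h2, ?_⟩
  have hdecomp : V = (2 * t + 1 - (ex + ey + ea) + 1) * 2 ^ m + C := by
    rw [← hV, ← hC, ← add_mul]
    exact (congrArg (fun n => n * 2 ^ m)
      (show 2 * t + 1 - (ex + ey + ea) + 1 + (ex + ey + ea) = 2 * t + 2 by omega)).symm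
  have hPge : r' ≤ (2 * t + 1 - (ex + ey + ea) + 1) * 2 ^ m :=
    le_trans (by omega) (Nat.le_mul_of_pos_left _ (by omega))
  obtain ⟨P, hP⟩ : ∃ P, (2 * t + 1 - (ex + ey + ea) + 1) * 2 ^ m = P := ⟨_, rfl⟩
  rw [hP] at hdecomp hPge ⊢
  omega

def Fmap (e d h : ℕ) : ℕ × ℕ → ℕ × ℕ := fun p => (p.1 + e * h, p.2 + d * h)

lemma Fmap_inj (e d h : ℕ) : Function.Injective (Fmap e d h) := by
  rintro ⟨a, b⟩ ⟨c, f⟩ hpq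
  simp only [Fmap, Prod.mk.injEq] at hpq
  simp only [Prod.mk.injEq]
  omega

/-- helper to produce membership in an image -/
lemma mem_Fmap_image {e d h t m r : ℕ} {a b : ℕ} (a0 b0 : ℕ)
    (hmem : (a0, b0) ∈ Sset m r t) (hA : a = a0 + e * h) (hB : b = b0 + d * h) :
    (a, b) ∈ Fmap e d h '' Sset m r t :=
  ⟨(a0, b0), hmem, by simp [Fmap, hA, hB]⟩

lemma Sset_eq0 {m r : ℕ} (hr : r < 2 ^ m) :
    Sset (m + 1) r 0 =
      Fmap 0 0 (2 ^ m) '' Sset m r 1 ∪ Fmap 1 0 (2 ^ m) '' Sset m r 0 ∪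
        Fmap 0 1 (2 ^ m) '' Sset m r 0 ∪ Fmap 1 1 (2 ^ m) '' Sset m r 0 := by
  apply Set.Subset.antisymm
  · rintro ⟨a, b⟩ hmem
    obtain ⟨had, hbd, c, hc1, hc2, hc3, hmem'⟩ := Sset_down hr hmem
    have hadm := Nat.div_add_mod a (2 ^ m)
    have hbdm := Nat.div_add_mod b (2 ^ m)
    obtain ⟨ea, hea⟩ : ∃ e, a / 2 ^ m = e := ⟨_, rfl⟩
    obtain ⟨eb, heb⟩ : ∃ e, b / 2 ^ m = e := ⟨_, rfl⟩
    rw [hea] at had hc1 hc2 hadm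
    rw [heb] at hbd hc2 hbdm
    interval_cases ea <;> interval_cases eb
    · -- ea = 0, eb = 0 : c = 0, target S_1
      have hc : c = 0 := by omega
      subst hc
      exact Or.inl (Or.inl (Or.inl (mem_Fmap_image _ _ hmem' (by omega) (by omega))))
    · -- ea = 0, eb = 1 : c ∈ {0,1}, target S_0 (third)
      have hc : c = 0 ∨ c = 1 := by omega
      rcases hc with hc | hc <;> subst hc
      · exact Or.inl (Or.inr (mem_Fmap_image _ _ (Sset_mono hr hmem') (by omega) (by omega)))
      · exact Or.inl (Or.inr (mem_Fmap_image _ _ hmem' (by omega) (by omega)))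
    · -- ea = 1, eb = 0 : c = 1, target S_0 (second)
      have hc : c = 1 := by omega
      subst hc
      exact Or.inl (Or.inl (Or.inr (mem_Fmap_image _ _ hmem' (by omega) (by omega))))
    · -- ea = 1, eb = 1 : c = 1, target S_0 (fourth)
      have hc : c = 1 := by omega
      subst hc
      exact Or.inr (mem_Fmap_image _ _ hmem' (by omega) (by omega))
  · rintro ⟨a, b⟩ (((⟨⟨a0, b0⟩, hp, hFp⟩ | ⟨⟨a0, b0⟩, hp, hFp⟩) | ⟨⟨a0, b0⟩, hp, hFp⟩) | ⟨⟨a0, b0⟩, hp, hFp⟩) <;>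
      (simp only [Fmap, Prod.mk.injEq] at hFp; obtain ⟨hA, hB⟩ := hFp; subst hA; subst hB)
    · have hp' : (a0, b0) ∈ Sset m r (2 * 0 + 1 - (0 + 0 + 0)) := by norm_num; exact hp
      exact Sset_up (ex := 0) (ey := 0) hr (by norm_num) (by norm_num) (by norm_num)
        (by norm_num) (by norm_num) hp'
    · have hp' : (a0, b0) ∈ Sset m r (2 * 0 + 1 - (0 + 0 + 1)) := by norm_num; exact hp
      exact Sset_up (ex := 0) (ey := 0) hr (by norm_num) (by norm_num) (by norm_num)
        (by norm_num) (by norm_num) hp'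
    · have hp' : (a0, b0) ∈ Sset m r (2 * 0 + 1 - (1 + 0 + 0)) := by norm_num; exact hp
      exact Sset_up (ex := 1) (ey := 0) hr (by norm_num) (by norm_num) (by norm_num)
        (by norm_num) (by norm_num) hp'
    · have hp' : (a0, b0) ∈ Sset m r (2 * 0 + 1 - (0 + 0 + 1)) := by norm_num; exact hp
      exact Sset_up (ex := 0) (ey := 0) hr (by norm_num) (by norm_num) (by norm_num)
        (by norm_num) (by norm_num) hp'

lemma Sset_eq1 {m r : ℕ} (hr : r < 2 ^ m) :
    Sset (m + 1) r 1 =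
      Fmap 1 0 (2 ^ m) '' Sset m r 2 ∪ Fmap 0 1 (2 ^ m) '' Sset m r 1 ∪
        Fmap 1 1 (2 ^ m) '' Sset m r 0 := by
  apply Set.Subset.antisymm
  · rintro ⟨a, b⟩ hmem
    obtain ⟨had, hbd, c, hc1, hc2, hc3, hmem'⟩ := Sset_down hr hmem
    have hadm := Nat.div_add_mod a (2 ^ m)
    have hbdm := Nat.div_add_mod b (2 ^ m)
    obtain ⟨ea, hea⟩ : ∃ e, a / 2 ^ m = e := ⟨_, rfl⟩
    obtain ⟨eb, heb⟩ : ∃ e, b / 2 ^ m = e := ⟨_, rfl⟩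
    rw [hea] at had hc1 hc2 hadm
    rw [heb] at hbd hc2 hbdm
    interval_cases ea <;> interval_cases eb
    · -- ea = 0, eb = 0 : c = 0, S_3 empty
      have hc : c = 0 := by omega
      subst hc
      exact absurd hmem' (Sset_not_mem hr (by norm_num))
    · -- ea = 0, eb = 1 : c ∈ {0,1,2}
      have hc : c = 0 ∨ c = 1 ∨ c = 2 := by omega
      rcases hc with hc | hc | hc <;> subst hc
      · exact absurd hmem' (Sset_not_mem hr (by norm_num))
      · have h2 : (a % 2 ^ m, b % 2 ^ m) ∈ Sset m r 2 := by norm_num at hmem' ⊢; exact hmem'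
        exact Or.inl (Or.inr (mem_Fmap_image _ _ (Sset_mono hr h2) (by omega) (by omega)))
      · exact Or.inl (Or.inr (mem_Fmap_image _ _ hmem' (by omega) (by omega)))
    · -- ea = 1, eb = 0 : c = 1, S_2
      have hc : c = 1 := by omega
      subst hc
      exact Or.inl (Or.inl (mem_Fmap_image _ _ hmem' (by omega) (by omega)))
    · -- ea = 1, eb = 1 : c ∈ {1,2,3}
      have hc : c = 1 ∨ c = 2 ∨ c = 3 := by omega
      rcases hc with hc | hc | hc <;> subst hc
      · have h2 : (a % 2 ^ m, b % 2 ^ m) ∈ Sset m r 2 := by norm_num at hmem' ⊢; exact hmem'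
        exact Or.inr (mem_Fmap_image _ _ (Sset_mono hr (Sset_mono hr h2)) (by omega) (by omega))
      · have h2 : (a % 2 ^ m, b % 2 ^ m) ∈ Sset m r 1 := by norm_num at hmem' ⊢; exact hmem'
        exact Or.inr (mem_Fmap_image _ _ (Sset_mono hr h2) (by omega) (by omega))
      · exact Or.inr (mem_Fmap_image _ _ hmem' (by omega) (by omega))
  · rintro ⟨a, b⟩ ((⟨⟨a0, b0⟩, hp, hFp⟩ | ⟨⟨a0, b0⟩, hp, hFp⟩) | ⟨⟨a0, b0⟩, hp, hFp⟩) <;>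
      (simp only [Fmap, Prod.mk.injEq] at hFp; obtain ⟨hA, hB⟩ := hFp; subst hA; subst hB)
    · have hp' : (a0, b0) ∈ Sset m r (2 * 1 + 1 - (0 + 0 + 1)) := by norm_num; exact hp
      exact Sset_up (ex := 0) (ey := 0) hr (by norm_num) (by norm_num) (by norm_num)
        (by norm_num) (by norm_num) hp'
    · have hp' : (a0, b0) ∈ Sset m r (2 * 1 + 1 - (1 + 1 + 0)) := by norm_num; exact hp
      exact Sset_up (ex := 1) (ey := 1) hr (by norm_num) (by norm_num) (by norm_num)
        (by norm_num) (by norm_num) hp'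
    · have hp' : (a0, b0) ∈ Sset m r (2 * 1 + 1 - (1 + 1 + 1)) := by norm_num; exact hp
      exact Sset_up (ex := 1) (ey := 1) hr (by norm_num) (by norm_num) (by norm_num)
        (by norm_num) (by norm_num) hp'

lemma Sset_eq2 {m r : ℕ} (hr : r < 2 ^ m) :
    Sset (m + 1) r 2 = Fmap 1 1 (2 ^ m) '' Sset m r 2 := by
  apply Set.Subset.antisymm
  · rintro ⟨a, b⟩ hmem
    obtain ⟨had, hbd, c, hc1, hc2, hc3, hmem'⟩ := Sset_down hr hmem
    have hadm := Nat.div_add_mod a (2 ^ m)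
    have hbdm := Nat.div_add_mod b (2 ^ m)
    obtain ⟨ea, hea⟩ : ∃ e, a / 2 ^ m = e := ⟨_, rfl⟩
    obtain ⟨eb, heb⟩ : ∃ e, b / 2 ^ m = e := ⟨_, rfl⟩
    rw [hea] at had hc1 hc2 hadm
    rw [heb] at hbd hc2 hbdm
    interval_cases ea <;> interval_cases eb
    · have hc : c = 0 := by omega
      subst hc
      exact absurd hmem' (Sset_not_mem hr (by norm_num))
    · have hc : c = 0 ∨ c = 1 ∨ c = 2 := by omega
      rcases hc with hc | hc | hc <;> subst hc <;>
        exact absurd hmem' (Sset_not_mem hr (by norm_num))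
    · have hc : c = 1 := by omega
      subst hc
      exact absurd hmem' (Sset_not_mem hr (by norm_num))
    · have hc : c = 1 ∨ c = 2 ∨ c = 3 := by omega
      rcases hc with hc | hc | hc <;> subst hc
      · exact absurd hmem' (Sset_not_mem hr (by norm_num))
      · exact absurd hmem' (Sset_not_mem hr (by norm_num))
      · exact mem_Fmap_image _ _ hmem' (by omega) (by omega)
  · rintro ⟨a, b⟩ ⟨⟨a0, b0⟩, hp, hFp⟩
    simp only [Fmap, Prod.mk.injEq] at hFp
    obtain ⟨hA, hB⟩ := hFp; subst hA; subst hB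
    have hp' : (a0, b0) ∈ Sset m r (2 * 2 + 1 - (1 + 1 + 1)) := by norm_num; exact hp
    exact Sset_up (ex := 1) (ey := 1) hr (by norm_num) (by norm_num) (by norm_num)
      (by norm_num) (by norm_num) hp'

lemma Sset_finite (m r t : ℕ) : (Sset m r t).Finite := by
  apply Set.Finite.subset ((Set.finite_Iic (2 ^ m - 1)).prod (Set.finite_Iic (2 ^ m - 1)))
  rintro ⟨a, b⟩ ⟨ha, hb, _⟩
  exact ⟨ha, hb⟩

lemma Fmap_image_div {e d m r t : ℕ} {p : ℕ × ℕ}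
    (hp : p ∈ Fmap e d (2 ^ m) '' Sset m r t) :
    p.1 / 2 ^ m = e ∧ p.2 / 2 ^ m = d := by
  obtain ⟨⟨a0, b0⟩, hmem, hFp⟩ := hp
  obtain ⟨ha, hb, _⟩ := hmem
  have hpos : 0 < 2 ^ m := Nat.pow_pos (by norm_num)
  subst hFp
  simp only [Fmap]
  constructor
  · rw [mul_comm e, Nat.add_mul_div_left _ _ hpos, Nat.div_eq_of_lt (by omega)]; omega
  · rw [mul_comm d, Nat.add_mul_div_left _ _ hpos, Nat.div_eq_of_lt (by omega)]; omega

lemma Fmap_disjoint {e d e' d' m r t t' : ℕ} (hne : ¬(e = e' ∧ d = d')) :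
    Disjoint (Fmap e d (2 ^ m) '' Sset m r t) (Fmap e' d' (2 ^ m) '' Sset m r t') := by
  rw [Set.disjoint_left]
  intro p hp1 hp2
  obtain ⟨h1, h2⟩ := Fmap_image_div hp1
  obtain ⟨h3, h4⟩ := Fmap_image_div hp2
  exact hne ⟨h1 ▸ h3.symm ▸ rfl, h2 ▸ h4.symm ▸ rfl⟩

/-- Recursions for the cardinalities of `S₀, S₁, S₂` when
`1 ≤ r < 2^ℓ/2`. -/
theorem stmt_13 (ℓ r : ℕ) (hℓ : 2 ≤ ℓ) (hr1 : 1 ≤ r) (hr2 : 2 * r < 2 ^ ℓ) :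
    Nat.card ↥(Sset ℓ r 0) =
        3 * Nat.card ↥(Sset (ℓ - 1) r 0) + Nat.card ↥(Sset (ℓ - 1) r 1) ∧
      Nat.card ↥(Sset ℓ r 1) =
        Nat.card ↥(Sset (ℓ - 1) r 0) + Nat.card ↥(Sset (ℓ - 1) r 1) +
          Nat.card ↥(Sset (ℓ - 1) r 2) ∧
      Nat.card ↥(Sset ℓ r 2) = Nat.card ↥(Sset (ℓ - 1) r 2) := by
  obtain ⟨m, rfl⟩ : ∃ m, ℓ = m + 1 := ⟨ℓ - 1, by omega⟩
  have hr : r < 2 ^ m := by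
    have h2m : 2 ^ (m + 1) = 2 ^ m * 2 := pow_succ 2 m
    omega
  simp only [Nat.add_sub_cancel, Nat.card_coe_set_eq]
  have fin0 := Sset_finite m r 0
  have fin1 := Sset_finite m r 1
  have fin2 := Sset_finite m r 2
  refine ⟨?_, ?_, ?_⟩
  · rw [Sset_eq0 hr]
    rw [Set.ncard_union_eq
        (Set.disjoint_union_left.mpr ⟨Set.disjoint_union_left.mpr
          ⟨Fmap_disjoint (by omega), Fmap_disjoint (by omega)⟩, Fmap_disjoint (by omega)⟩)
        (((fin1.image _).union (fin0.image _)).union (fin0.image _)) (fin0.image _)]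
    rw [Set.ncard_union_eq
        (Set.disjoint_union_left.mpr ⟨Fmap_disjoint (by omega), Fmap_disjoint (by omega)⟩)
        ((fin1.image _).union (fin0.image _)) (fin0.image _)]
    rw [Set.ncard_union_eq (Fmap_disjoint (by omega)) (fin1.image _) (fin0.image _)]
    rw [Set.ncard_image_of_injective _ (Fmap_inj _ _ _),
        Set.ncard_image_of_injective _ (Fmap_inj _ _ _),
        Set.ncard_image_of_injective _ (Fmap_inj _ _ _),
        Set.ncard_image_of_injective _ (Fmap_inj _ _ _)]
    ring
  · rw [Sset_eq1 hr]
    rw [Set.ncard_union_eq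
        (Set.disjoint_union_left.mpr ⟨Fmap_disjoint (by omega), Fmap_disjoint (by omega)⟩)
        ((fin2.image _).union (fin1.image _)) (fin0.image _)]
    rw [Set.ncard_union_eq (Fmap_disjoint (by omega)) (fin2.image _) (fin1.image _)]
    rw [Set.ncard_image_of_injective _ (Fmap_inj _ _ _),
        Set.ncard_image_of_injective _ (Fmap_inj _ _ _),
        Set.ncard_image_of_injective _ (Fmap_inj _ _ _)]
    ring
  · rw [Sset_eq2 hr, Set.ncard_image_of_injective _ (Fmap_inj _ _ _)]
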